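/- Let σ ≠ 0 be a real number. There is no non-constant polynomial P ∈ ℝ[a,b] such that ∂_a P(a,b) · b(ab−σ)·√(a²(ab−σ)²+β) + ∂_b P(a,b) · a(ab−σ)·√(b²(ab−σ)²+β) = 0 holds identically for all (a,b) ∈ ℝ², where β > 0 is fixed. That is, the scalar β-smoothed spectral gradient flow for the loss (1/2)(ab−σ)² admits no non-constant polynomial invariant. -/
import Mathlib


open Polynomial in
lemma aux_one_var (σ β : ℝ) (hσ : σ ≠ 0) (hβ : 0 < β) (p q : Polynomial ℝ)
    (h : p ^ 2 * (C (σ ^ 2) * X ^ 2 + C β) = C β * q ^ 2) :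
    p = 0 ∧ q = 0 := by
  have hβ' : β ≠ 0 := ne_of_gt hβ
  have hquad : (C (σ ^ 2) * X ^ 2 + C β : ℝ[X]) ≠ 0 := by
    intro hz
    have h0 : (C (σ ^ 2) * X ^ 2 + C β : ℝ[X]).coeff 0 = β := by simp
    rw [hz] at h0; simp at h0; exact hβ' h0.symm
  have hp : p = 0 := by
    by_contra hp
    set φ : ℝ →+* ℂ := algebraMap ℝ ℂ with hφ
    have hinj : Function.Injective φ := φ.injective
    set f := p.map φ with hf
    set g := q.map φ with hg
    have hfne : f ≠ 0 := by
      simpa [hf, Polynomial.map_ne_zero_iff hinj] using hp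
    have hq : q ≠ 0 := by
      rintro rfl
      have h' : p ^ 2 * (C (σ ^ 2) * X ^ 2 + C β) = 0 := by simpa using h
      rcases mul_eq_zero.mp h' with h'' | h''
      · exact hp (pow_eq_zero_iff two_ne_zero |>.mp h'')
      · exact hquad h''
    have hgne : g ≠ 0 := by
      simpa [hg, Polynomial.map_ne_zero_iff hinj] using hq
    have hC : (φ β : ℂ) ≠ 0 := by simpa [hφ] using hβ'
    have hc : f ^ 2 * (C (φ (σ ^ 2)) * X ^ 2 + C (φ β)) = C (φ β) * g ^ 2 := by
      have := congrArg (Polynomial.map φ) h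
      simpa [Polynomial.map_mul, Polynomial.map_pow, Polynomial.map_add, hf, hg] using this
    set z0 : ℂ := Complex.I * ((Real.sqrt β : ℂ) / (σ : ℂ)) with hz0def
    have hsb : ((Real.sqrt β : ℝ) : ℂ) ≠ 0 := by
      simp only [Complex.ofReal_ne_zero]
      positivity
    have hσc : ((σ : ℝ) : ℂ) ≠ 0 := Complex.ofReal_ne_zero.mpr hσ
    have hz0 : z0 ≠ 0 := by
      rw [hz0def]
      exact mul_ne_zero Complex.I_ne_zero (div_ne_zero hsb hσc)
    have hz2 : z0 ^ 2 * ((σ : ℂ)) ^ 2 = -(β : ℂ) := by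
      have hb : ((Real.sqrt β : ℝ) : ℂ) ^ 2 = (β : ℂ) := by
        rw [← Complex.ofReal_pow, Real.sq_sqrt hβ.le]
      have : z0 ^ 2 * ((σ : ℂ)) ^ 2
          = Complex.I ^ 2 * ((Real.sqrt β : ℂ) ^ 2 / (σ : ℂ) ^ 2) * (σ : ℂ) ^ 2 := by
        rw [hz0def]; ring
      rw [this, Complex.I_sq, hb]
      field_simp
    have hfact : (C (φ (σ ^ 2)) * X ^ 2 + C (φ β) : ℂ[X])
        = C (φ (σ ^ 2)) * ((X - C z0) * (X + C z0)) := by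
      have h1 : (φ (σ ^ 2) : ℂ) = (σ : ℂ) ^ 2 := by simp [hφ]
      have h2 : (φ β : ℂ) = (β : ℂ) := by simp [hφ]
      rw [h1, h2]
      have hc2 : (C (z0 ^ 2 * ((σ : ℂ)) ^ 2) : ℂ[X]) = C (-(β : ℂ)) := by rw [hz2]
      simp only [map_mul, map_pow, map_neg] at hc2
      simp only [map_pow]
      linear_combination hc2
    have hrhs_ne : C (φ β) * g ^ 2 ≠ 0 := mul_ne_zero (by simpa using hC) (pow_ne_zero _ hgne)
    have hlhs_ne : f ^ 2 * (C (φ (σ ^ 2)) * X ^ 2 + C (φ β)) ≠ 0 := hc ▸ hrhs_ne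
    have hquadc_ne : (C (φ (σ ^ 2)) * X ^ 2 + C (φ β) : ℂ[X]) ≠ 0 :=
      right_ne_zero_of_mul hlhs_ne
    have hσ2 : (φ (σ ^ 2) : ℂ) ≠ 0 := by
      simp [hφ, hσ]
    have hmquad : rootMultiplicity z0 (C (φ (σ ^ 2)) * X ^ 2 + C (φ β)) = 1 := by
      rw [hfact]
      have hC_ne : (C (φ (σ ^ 2)) : ℂ[X]) ≠ 0 := by simpa using hσ2
      have hx1 : ((X - C z0 : ℂ[X])) ≠ 0 := X_sub_C_ne_zero z0
      have hx2 : ((X + C z0 : ℂ[X])) ≠ 0 := by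
        intro hz
        have : (X + C z0 : ℂ[X]).coeff 1 = 1 := by simp
        rw [hz] at this; simp at this
      rw [rootMultiplicity_mul (mul_ne_zero hC_ne (mul_ne_zero hx1 hx2)),
        rootMultiplicity_mul (mul_ne_zero hx1 hx2),
        rootMultiplicity_X_sub_C_self,
        rootMultiplicity_eq_zero (p := C (φ (σ ^ 2))) (by simpa [IsRoot] using hσ2),
        rootMultiplicity_eq_zero (p := X + C z0)
          (by simp only [IsRoot, eval_add, eval_X, eval_C]; simpa [two_mul] using hz0)]
    have hml : rootMultiplicity z0 (f ^ 2 * (C (φ (σ ^ 2)) * X ^ 2 + C (φ β)))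
        = 2 * rootMultiplicity z0 f + 1 := by
      rw [rootMultiplicity_mul hlhs_ne, hmquad, pow_two,
        rootMultiplicity_mul (mul_ne_zero hfne hfne)]
      ring
    have hmr : rootMultiplicity z0 (C (φ β) * g ^ 2) = 2 * rootMultiplicity z0 g := by
      rw [rootMultiplicity_mul hrhs_ne, pow_two,
        rootMultiplicity_mul (mul_ne_zero hgne hgne),
        rootMultiplicity_eq_zero (by simp [IsRoot, hC])]
      ring
    rw [hc, hmr] at hml
    omega
  subst hp
  refine ⟨rfl, ?_⟩
  have h' : C β * q ^ 2 = 0 := by simpa using h.symm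
  rcases mul_eq_zero.mp h' with h'' | h''
  · exact absurd (by simpa using h'') hβ'
  · exact pow_eq_zero_iff two_ne_zero |>.mp h''

open Polynomial in
lemma div_step (σ β : ℝ) (hσ : σ ≠ 0) (hβ : 0 < β) (F G : (Polynomial ℝ)[X])
    (hid : F ^ 2 * (X ^ 2 * (X * C X - C (C σ)) ^ 2 + C (C β)) =
      G ^ 2 * ((C X) ^ 2 * (X * C X - C (C σ)) ^ 2 + C (C β))) :
    X * C X ∣ F ∧ X * C X ∣ G := by
  have hCXne : (C (X : ℝ[X]) : (ℝ[X])[X]) ≠ 0 := C_ne_zero.mpr X_ne_zero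
  -- substitution b = 0 (map coefficients by eval at 0)
  set π0 : (ℝ[X])[X] →+* ℝ[X] := mapRingHom (evalRingHom 0) with hπ0
  have h0 := congrArg π0 hid
  simp only [map_mul, map_pow, map_add, map_sub, hπ0, coe_mapRingHom, Polynomial.map_X,
    Polynomial.map_C, eval_C, eval_X, map_zero, C_0, mul_zero, zero_mul, zero_sub,
    neg_pow, zero_add, zero_pow, two_ne_zero, even_two, Even.neg_pow] at h0
  simp only [coe_evalRingHom, eval_X, eval_C, C_0, mul_zero, zero_mul, zero_sub, zero_add,
    even_two, Even.neg_pow, zero_pow, two_ne_zero] at h0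
  -- h0 : (F.map _)^2 * (X^2 * (C σ)^2 + C β) = (G.map _)^2 * C β  (roughly)
  have hf0 : (F.map (evalRingHom 0)) ^ 2 * (C (σ ^ 2) * X ^ 2 + C β)
      = C β * (G.map (evalRingHom 0)) ^ 2 := by
    rw [map_pow]
    linear_combination h0
  obtain ⟨hf, hg⟩ := aux_one_var σ β hσ hβ _ _ hf0
  -- substitution a = 0 (evaluate outer variable at 0)
  set ρ : (ℝ[X])[X] →+* ℝ[X] := evalRingHom 0 with hρ
  have h1 := congrArg ρ hid
  simp only [map_mul, map_pow, map_add, map_sub, hρ, coe_evalRingHom, eval_C, eval_X,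
    eval_mul, eval_add, eval_sub, eval_pow, zero_mul, zero_sub, zero_pow, two_ne_zero,
    zero_add, even_two, Even.neg_pow] at h1
  have hg0 : (G.eval 0) ^ 2 * (C (σ ^ 2) * X ^ 2 + C β)
      = C β * (F.eval 0) ^ 2 := by
    rw [map_pow]
    linear_combination -h1
  obtain ⟨hg', hf'⟩ := aux_one_var σ β hσ hβ _ _ hg0
  -- divisibility by C X
  have hbF : (C (X : ℝ[X]) : (ℝ[X])[X]) ∣ F := by
    rw [C_dvd_iff_dvd_coeff]
    intro i
    rw [X_dvd_iff, coeff_zero_eq_eval_zero]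
    have := congrArg (fun p => Polynomial.coeff p i) hf
    simpa [coeff_map] using this
  have hbG : (C (X : ℝ[X]) : (ℝ[X])[X]) ∣ G := by
    rw [C_dvd_iff_dvd_coeff]
    intro i
    rw [X_dvd_iff, coeff_zero_eq_eval_zero]
    have := congrArg (fun p => Polynomial.coeff p i) hg
    simpa [coeff_map] using this
  -- divisibility by X
  have haF : (X : (ℝ[X])[X]) ∣ F := by
    rw [X_dvd_iff, coeff_zero_eq_eval_zero, hf']
  have haG : (X : (ℝ[X])[X]) ∣ G := by
    rw [X_dvd_iff, coeff_zero_eq_eval_zero, hg']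
  have hprime : Prime (C (X : ℝ[X]) : (ℝ[X])[X]) := prime_C_iff.mpr prime_X
  have hnd : ¬ (C (X : ℝ[X]) : (ℝ[X])[X]) ∣ X := by
    rintro ⟨k, hk⟩
    have := congrArg π0 hk
    simp only [hπ0, coe_mapRingHom, Polynomial.map_X, map_mul, Polynomial.map_C,
      coe_evalRingHom, eval_X, C_0, zero_mul] at this
    exact X_ne_zero this
  constructor
  · obtain ⟨F2, rfl⟩ := haF
    rcases hprime.2.2 _ _ hbF with h | h
    · exact absurd h hnd
    · obtain ⟨F1, rfl⟩ := h
      exact ⟨F1, by ring⟩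
  · obtain ⟨G2, rfl⟩ := haG
    rcases hprime.2.2 _ _ hbG with h | h
    · exact absurd h hnd
    · obtain ⟨G1, rfl⟩ := h
      exact ⟨G1, by ring⟩

open Polynomial in
lemma descent (σ β : ℝ) (hσ : σ ≠ 0) (hβ : 0 < β) :
    ∀ n : ℕ, ∀ F G : (Polynomial ℝ)[X], F.natDegree ≤ n →
    F ^ 2 * (X ^ 2 * (X * C X - C (C σ)) ^ 2 + C (C β)) =
      G ^ 2 * ((C X) ^ 2 * (X * C X - C (C σ)) ^ 2 + C (C β)) →
    F = 0 ∧ G = 0 := by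
  have hβ' : β ≠ 0 := ne_of_gt hβ
  have hCXne : (C (X : ℝ[X]) : (ℝ[X])[X]) ≠ 0 := C_ne_zero.mpr X_ne_zero
  have hXCXne : (X * C X : (ℝ[X])[X]) ≠ 0 := mul_ne_zero X_ne_zero hCXne
  have hQb_ne : ((C X) ^ 2 * (X * C X - C (C σ)) ^ 2 + C (C β) : (ℝ[X])[X]) ≠ 0 := by
    intro hz
    have := congrArg (mapRingHom (evalRingHom (0:ℝ))) hz
    simp only [map_add, map_mul, map_pow, map_sub, coe_mapRingHom, Polynomial.map_X,
      Polynomial.map_C, coe_evalRingHom, eval_X, eval_C, C_0, zero_mul, mul_zero, zero_sub,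
      zero_pow, two_ne_zero, zero_add, even_two, Even.neg_pow, Polynomial.map_zero] at this
    rw [zero_pow two_ne_zero, zero_mul, zero_add] at this
    exact (C_ne_zero.mpr hβ') this
  have hGzero : ∀ G : (ℝ[X])[X],
      (0 : (ℝ[X])[X]) = G ^ 2 * ((C X) ^ 2 * (X * C X - C (C σ)) ^ 2 + C (C β)) → G = 0 := by
    intro G h
    rcases mul_eq_zero.mp h.symm with h' | h'
    · exact pow_eq_zero_iff two_ne_zero |>.mp h'
    · exact absurd h' hQb_ne
  have hdeg1 : (X * C X : (ℝ[X])[X]).natDegree = 1 := by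
    rw [natDegree_mul X_ne_zero hCXne, natDegree_X, natDegree_C]
  intro n
  induction n with
  | zero =>
    intro F G hdeg hid
    by_cases hF : F = 0
    · subst hF
      exact ⟨rfl, hGzero G (by simpa using hid)⟩
    · exfalso
      obtain ⟨hdF, -⟩ := div_step σ β hσ hβ F G hid
      have := natDegree_le_of_dvd hdF hF
      omega
  | succ n ih =>
    intro F G hdeg hid
    by_cases hF : F = 0
    · subst hF
      exact ⟨rfl, hGzero G (by simpa using hid)⟩
    · exfalso
      obtain ⟨⟨F1, rfl⟩, ⟨G1, rfl⟩⟩ := div_step σ β hσ hβ F G hid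
      have hF1 : F1 ≠ 0 := by rintro rfl; simp at hF
      have hcancel : F1 ^ 2 * (X ^ 2 * (X * C X - C (C σ)) ^ 2 + C (C β)) =
          G1 ^ 2 * ((C X) ^ 2 * (X * C X - C (C σ)) ^ 2 + C (C β)) := by
        have h2 : (X * C X : (ℝ[X])[X]) ^ 2 *
            (F1 ^ 2 * (X ^ 2 * (X * C X - C (C σ)) ^ 2 + C (C β))) =
            (X * C X : (ℝ[X])[X]) ^ 2 *
            (G1 ^ 2 * ((C X) ^ 2 * (X * C X - C (C σ)) ^ 2 + C (C β))) := by
          linear_combination hid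
        exact mul_left_cancel₀ (pow_ne_zero 2 hXCXne) h2
      have hdegF1 : F1.natDegree ≤ n := by
        have := natDegree_mul hXCXne hF1
        omega
      exact hF1 (ih F1 G1 hdegF1 hcancel).1

open MvPolynomial


lemma coeff_zero_of_pderiv {P : MvPolynomial (Fin 2) ℝ} {i : Fin 2} (h : pderiv i P = 0)
    {m : Fin 2 →₀ ℕ} (hm : m i ≠ 0) : coeff m P = 0 := by
  by_cases hmem : m ∈ P.support
  · set m' := m - Finsupp.single i 1 with hm'
    have hmm : m' + Finsupp.single i 1 = m := by
      rw [hm']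
      exact tsub_add_cancel_of_le (Finsupp.single_le_iff.mpr (Nat.one_le_iff_ne_zero.mpr hm))
    have key : coeff m' (pderiv i P) = coeff m P * (m i : ℝ) := by
      conv_lhs => rw [as_sum P, map_sum, coeff_sum]
      simp only [pderiv_monomial, coeff_monomial]
      rw [Finset.sum_eq_single_of_mem m hmem]
      · rw [if_pos]
        rw [hm']
      · intro s hs hsne
        split_ifs with hcond
        · by_cases hsi : s i = 0
          · simp [hsi]
          · exfalso
            apply hsne
            have : s - Finsupp.single i 1 + Finsupp.single i 1 = s :=
              tsub_add_cancel_of_le (Finsupp.single_le_iff.mpr (Nat.one_le_iff_ne_zero.mpr hsi))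
            rw [← this, hcond, hmm]
        · rfl
    rw [h, coeff_zero] at key
    rcases mul_eq_zero.mp key.symm with h' | h'
    · exact h'
    · exact absurd (Nat.cast_eq_zero.mp h') hm
  · exact notMem_support_iff.mp hmem

lemma eq_C_of_pderiv_eq_zero (P : MvPolynomial (Fin 2) ℝ)
    (h0 : pderiv 0 P = 0) (h1 : pderiv 1 P = 0) : P = C (coeff 0 P) := by
  apply MvPolynomial.ext
  intro m
  rw [coeff_C]
  split_ifs with hm
  · rw [← hm]
  · have hex : ∃ i, m i ≠ 0 := by
      by_contra hc
      push_neg at hc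
      exact hm (Finsupp.ext fun i => (hc i).symm ▸ rfl).symm
    obtain ⟨i, hi⟩ := hex
    fin_cases i
    · exact coeff_zero_of_pderiv h0 hi
    · exact coeff_zero_of_pderiv h1 hi

lemma eval_bridge (p : MvPolynomial (Fin 2) ℝ) (a b : ℝ) :
    Polynomial.eval b (Polynomial.eval (Polynomial.C a)
      (MvPolynomial.aeval
        ![(Polynomial.X : Polynomial (Polynomial ℝ)), Polynomial.C Polynomial.X] p))
    = eval ![a, b] p := by
  induction p using MvPolynomial.induction_on with
  | C r => simp [Polynomial.algebraMap_apply]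
  | add p q hp hq => simp [hp, hq]
  | mul_X p i hp =>
    fin_cases i <;> simp [hp]

/-- For fixed reals `σ ≠ 0` and `β > 0`, the scalar β-smoothed spectral gradient
flow for the loss `(1/2)(ab − σ)²` admits no non-constant polynomial invariant:
if `P ∈ ℝ[a,b]` satisfies, identically on `ℝ²`,
`∂_a P · b(ab−σ)·√(a²(ab−σ)²+β) + ∂_b P · a(ab−σ)·√(b²(ab−σ)²+β) = 0`,
then `P` is constant. -/
theorem no_polynomial_invariant_smoothed (σ β : ℝ) (hσ : σ ≠ 0) (hβ : 0 < β)
    (P : MvPolynomial (Fin 2) ℝ)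
    (hinv : ∀ a b : ℝ,
      eval ![a, b] (pderiv (0 : Fin 2) P) *
        (b * (a * b - σ) * Real.sqrt (a ^ 2 * (a * b - σ) ^ 2 + β)) +
      eval ![a, b] (pderiv (1 : Fin 2) P) *
        (a * (a * b - σ) * Real.sqrt (b ^ 2 * (a * b - σ) ^ 2 + β)) = 0) :
    ∃ c : ℝ, P = C c := by
  set A0 := pderiv (0 : Fin 2) P with hA0
  set B0 := pderiv (1 : Fin 2) P with hB0
  set U : MvPolynomial (Fin 2) ℝ := X 0 * X 1 - C σ with hU
  -- Step 1: polynomial identity from the pointwise identity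
  have hH : U ^ 2 * ((X 1 * A0) ^ 2 * ((X 0) ^ 2 * U ^ 2 + C β)
      - (X 0 * B0) ^ 2 * ((X 1) ^ 2 * U ^ 2 + C β)) = 0 := by
    apply MvPolynomial.funext
    intro x
    have hx : ![x 0, x 1] = x := by
      funext i; fin_cases i <;> rfl
    have hi := hinv (x 0) (x 1)
    rw [hx] at hi
    set a := x 0
    set b := x 1
    set A := eval x A0 with hA
    set B := eval x B0 with hB
    set s1 := Real.sqrt (a ^ 2 * (a * b - σ) ^ 2 + β) with hs1def
    set s2 := Real.sqrt (b ^ 2 * (a * b - σ) ^ 2 + β) with hs2def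
    have hs1 : s1 ^ 2 = a ^ 2 * (a * b - σ) ^ 2 + β := Real.sq_sqrt (by positivity)
    have hs2 : s2 ^ 2 = b ^ 2 * (a * b - σ) ^ 2 + β := Real.sq_sqrt (by positivity)
    simp only [hU, eval_mul, eval_sub, eval_add, eval_pow, eval_X, eval_C, map_zero, eval_zero]
    linear_combination (A * b * (a * b - σ) * s1 - B * a * (a * b - σ) * s2) * hi
      - (a * b - σ) ^ 2 * (b * A) ^ 2 * hs1 + (a * b - σ) ^ 2 * (a * B) ^ 2 * hs2
  have hUne : U ≠ 0 := by
    intro h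
    have := congrArg (eval ![(0 : ℝ), 0]) h
    simp [hU] at this
    exact hσ this
  have hE : (X 1 * A0) ^ 2 * ((X 0) ^ 2 * U ^ 2 + C β)
      = (X 0 * B0) ^ 2 * ((X 1) ^ 2 * U ^ 2 + C β) := by
    rcases mul_eq_zero.mp hH with h' | h'
    · exact absurd h' (pow_ne_zero 2 hUne)
    · exact sub_eq_zero.mp h'
  -- Step 2: transfer to ℝ[b][a]
  simp only [hU] at hE
  have hEA := congrArg (MvPolynomial.aeval
    ![(Polynomial.X : Polynomial (Polynomial ℝ)), Polynomial.C Polynomial.X]) hE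
  simp only [map_mul, map_pow, map_add, map_sub, aeval_X, aeval_C,
    Matrix.cons_val_zero, Matrix.cons_val_one, Matrix.head_cons,
    Polynomial.algebraMap_apply, Algebra.algebraMap_self, RingHom.id_apply] at hEA
  obtain ⟨hF0, hG0⟩ := descent σ β hσ hβ
    (Polynomial.C Polynomial.X * (MvPolynomial.aeval
      ![(Polynomial.X : Polynomial (Polynomial ℝ)), Polynomial.C Polynomial.X]) A0).natDegree
    (Polynomial.C Polynomial.X * (MvPolynomial.aeval
      ![(Polynomial.X : Polynomial (Polynomial ℝ)), Polynomial.C Polynomial.X]) A0)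
    (Polynomial.X * (MvPolynomial.aeval
      ![(Polynomial.X : Polynomial (Polynomial ℝ)), Polynomial.C Polynomial.X]) B0)
    le_rfl (by linear_combination hEA)
  have hΦA : (MvPolynomial.aeval
      ![(Polynomial.X : Polynomial (Polynomial ℝ)), Polynomial.C Polynomial.X]) A0 = 0 := by
    rcases mul_eq_zero.mp hF0 with h' | h'
    · exact absurd h' (Polynomial.C_ne_zero.mpr Polynomial.X_ne_zero)
    · exact h'
  have hΦB : (MvPolynomial.aeval
      ![(Polynomial.X : Polynomial (Polynomial ℝ)), Polynomial.C Polynomial.X]) B0 = 0 := by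
    rcases mul_eq_zero.mp hG0 with h' | h'
    · exact absurd h' Polynomial.X_ne_zero
    · exact h'
  -- Step 3: back to MvPolynomial
  have hA0z : A0 = 0 := by
    apply MvPolynomial.funext
    intro x
    have hx : ![x 0, x 1] = x := by funext i; fin_cases i <;> rfl
    rw [← hx, ← eval_bridge A0 (x 0) (x 1), hΦA]
    simp
  have hB0z : B0 = 0 := by
    apply MvPolynomial.funext
    intro x
    have hx : ![x 0, x 1] = x := by funext i; fin_cases i <;> rfl
    rw [← hx, ← eval_bridge B0 (x 0) (x 1), hΦB]
    simp
  exact ⟨coeff 0 P, eq_C_of_pderiv_eq_zero P hA0z hB0z⟩
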